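/- Suppose R_M ⫫ (M, Y) | (X, A, R_Y) and all conditioning events have positive probability. Then for all values r_y of R_Y and all (x, a, m): P(R_Y = r_y, M = m | X = x, A = a) = P(R_Y = r_y, M = m | X = x, A = a, R_M = 1) · [P(R_M = 1 | X = x, A = a) / P(R_M = 1 | X = x, A = a, R_Y = r_y)]. -/

import Mathlib

open scoped Classical

noncomputable def Pr {Ω : Type*} [Fintype Ω] (p : Ω → ℝ) (E : Ω → Prop) : ℝ :=
  ∑ ω, if E ω then p ω else 0

noncomputable def cPr {Ω : Type*} [Fintype Ω] (p : Ω → ℝ) (E F : Ω → Prop) : ℝ :=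
  Pr p (fun ω => E ω ∧ F ω) / Pr p F

noncomputable def odds {Ω : Type*} [Fintype Ω] (p : Ω → ℝ) (E F : Ω → Prop) : ℝ :=
  cPr p E F / cPr p (fun ω => ¬ E ω) F

lemma Pr_congr {Ω : Type*} [Fintype Ω] (p : Ω → ℝ) {E F : Ω → Prop}
    (h : ∀ ω, E ω ↔ F ω) : Pr p E = Pr p F := by
  unfold Pr
  exact Finset.sum_congr rfl fun ω _ => by simp [h ω]

lemma Pr_mono {Ω : Type*} [Fintype Ω] {p : Ω → ℝ} (hp : ∀ ω, 0 ≤ p ω)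
    {E F : Ω → Prop} (h : ∀ ω, E ω → F ω) : Pr p E ≤ Pr p F := by
  unfold Pr
  refine Finset.sum_le_sum fun ω _ => ?_
  by_cases hE : E ω
  · simp [hE, h ω hE]
  · simp only [hE, if_false]
    split <;> simp [hp ω]

lemma Pr_partition {Ω 𝒴 : Type*} [Fintype Ω] (p : Ω → ℝ) (E : Ω → Prop) (Y : Ω → 𝒴) :
    Pr p E = ∑ y ∈ Finset.image Y Finset.univ, Pr p (fun ω => E ω ∧ Y ω = y) := by
  unfold Pr
  rw [Finset.sum_comm]
  refine Finset.sum_congr rfl fun ω _ => ?_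
  by_cases hE : E ω
  · simp only [hE, true_and]
    rw [Finset.sum_ite_eq (Finset.image Y Finset.univ) (Y ω) (fun _ => p ω)]
    simp
  · simp [hE]

/-- Density-tilting step in identification under Model S6. -/
theorem S6_density_tilting
    {Ω 𝒳 𝒜 ℳ 𝒴 : Type*} [Fintype Ω]
    (p : Ω → ℝ) (hp : ∀ ω, 0 ≤ p ω) (hsum : ∑ ω, p ω = 1)
    (X : Ω → 𝒳) (A : Ω → 𝒜) (M : Ω → ℳ) (Y : Ω → 𝒴) (RM RY : Ω → ℕ)
    (hRM : ∀ ω, RM ω = 0 ∨ RM ω = 1) (hRY : ∀ ω, RY ω = 0 ∨ RY ω = 1)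
    -- R_M ⫫ (M, Y) ∣ (X, A, R_Y)
    (h : ∀ (rm : ℕ) (m : ℳ) (y : 𝒴) (x : 𝒳) (a : 𝒜) (ry : ℕ),
      0 < Pr p (fun ω => M ω = m ∧ Y ω = y ∧ X ω = x ∧ A ω = a ∧ RY ω = ry) →
      cPr p (fun ω => RM ω = rm)
          (fun ω => M ω = m ∧ Y ω = y ∧ X ω = x ∧ A ω = a ∧ RY ω = ry)
        = cPr p (fun ω => RM ω = rm) (fun ω => X ω = x ∧ A ω = a ∧ RY ω = ry)) :
    ∀ (ry : ℕ) (x : 𝒳) (a : 𝒜) (m : ℳ),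
      0 < Pr p (fun ω => RM ω = 1 ∧ RY ω = ry ∧ X ω = x ∧ A ω = a) →
      (∀ (m' : ℳ) (y' : 𝒴),
        0 < Pr p (fun ω => M ω = m' ∧ Y ω = y' ∧ X ω = x ∧ A ω = a ∧ RY ω = ry)) →
      cPr p (fun ω => RY ω = ry ∧ M ω = m) (fun ω => X ω = x ∧ A ω = a)
        = cPr p (fun ω => RY ω = ry ∧ M ω = m) (fun ω => X ω = x ∧ A ω = a ∧ RM ω = 1)
          * (cPr p (fun ω => RM ω = 1) (fun ω => X ω = x ∧ A ω = a)
            / cPr p (fun ω => RM ω = 1) (fun ω => X ω = x ∧ A ω = a ∧ RY ω = ry)) := by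
  intro ry x a m hpos hposMY
  -- positivity of conditioning events
  have hD0 : 0 < Pr p (fun ω => X ω = x ∧ A ω = a) :=
    lt_of_lt_of_le hpos (Pr_mono hp (by tauto))
  have hD3 : 0 < Pr p (fun ω => X ω = x ∧ A ω = a ∧ RY ω = ry) :=
    lt_of_lt_of_le hpos (Pr_mono hp (by tauto))
  have hD1 : 0 < Pr p (fun ω => X ω = x ∧ A ω = a ∧ RM ω = 1) :=
    lt_of_lt_of_le hpos (Pr_mono hp (by tauto))
  have hN3 : 0 < Pr p (fun ω => RM ω = 1 ∧ X ω = x ∧ A ω = a ∧ RY ω = ry) :=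
    lt_of_lt_of_le hpos (le_of_eq (Pr_congr p (by tauto)))
  -- abbreviation: c = cPr(RM=1 | X,A,RY)
  set c : ℝ := Pr p (fun ω => RM ω = 1 ∧ X ω = x ∧ A ω = a ∧ RY ω = ry)
      / Pr p (fun ω => X ω = x ∧ A ω = a ∧ RY ω = ry) with hc
  -- per-y consequence of conditional independence
  have key_y : ∀ y : 𝒴,
      Pr p (fun ω => (M ω = m ∧ X ω = x ∧ A ω = a ∧ RY ω = ry) ∧ Y ω = y)
        * c
      = Pr p (fun ω => (RM ω = 1 ∧ M ω = m ∧ X ω = x ∧ A ω = a ∧ RY ω = ry) ∧ Y ω = y) := by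
    intro y
    have hbase := hposMY m y
    have hh := h 1 m y x a ry hbase
    simp only [cPr] at hh
    have hbase' : Pr p (fun ω => M ω = m ∧ Y ω = y ∧ X ω = x ∧ A ω = a ∧ RY ω = ry) ≠ 0 :=
      ne_of_gt hbase
    have e1 : Pr p (fun ω => RM ω = 1 ∧ M ω = m ∧ Y ω = y ∧ X ω = x ∧ A ω = a ∧ RY ω = ry)
        = Pr p (fun ω => (RM ω = 1 ∧ M ω = m ∧ X ω = x ∧ A ω = a ∧ RY ω = ry) ∧ Y ω = y) :=
      Pr_congr p (by tauto)
    have e2 : Pr p (fun ω => M ω = m ∧ Y ω = y ∧ X ω = x ∧ A ω = a ∧ RY ω = ry)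
        = Pr p (fun ω => (M ω = m ∧ X ω = x ∧ A ω = a ∧ RY ω = ry) ∧ Y ω = y) :=
      Pr_congr p (by tauto)
    have hh' : Pr p (fun ω => RM ω = 1 ∧ M ω = m ∧ Y ω = y ∧ X ω = x ∧ A ω = a ∧ RY ω = ry)
        = c * Pr p (fun ω => M ω = m ∧ Y ω = y ∧ X ω = x ∧ A ω = a ∧ RY ω = ry) := by
      rw [div_eq_iff hbase'] at hh
      rw [hh, hc]
    rw [e1, e2] at hh'
    rw [hh']; ring
  -- key identity summed over y
  have key : Pr p (fun ω => M ω = m ∧ X ω = x ∧ A ω = a ∧ RY ω = ry) * c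
      = Pr p (fun ω => RM ω = 1 ∧ M ω = m ∧ X ω = x ∧ A ω = a ∧ RY ω = ry) := by
    rw [Pr_partition p (fun ω => M ω = m ∧ X ω = x ∧ A ω = a ∧ RY ω = ry) Y,
        Pr_partition p (fun ω => RM ω = 1 ∧ M ω = m ∧ X ω = x ∧ A ω = a ∧ RY ω = ry) Y,
        Finset.sum_mul]
    exact Finset.sum_congr rfl fun y _ => key_y y
  -- now the final algebra
  simp only [cPr]
  have e1 : Pr p (fun ω => (RY ω = ry ∧ M ω = m) ∧ X ω = x ∧ A ω = a)
      = Pr p (fun ω => M ω = m ∧ X ω = x ∧ A ω = a ∧ RY ω = ry) :=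
    Pr_congr p (by tauto)
  have e2 : Pr p (fun ω => (RY ω = ry ∧ M ω = m) ∧ X ω = x ∧ A ω = a ∧ RM ω = 1)
      = Pr p (fun ω => RM ω = 1 ∧ M ω = m ∧ X ω = x ∧ A ω = a ∧ RY ω = ry) :=
    Pr_congr p (by tauto)
  have e3 : Pr p (fun ω => RM ω = 1 ∧ X ω = x ∧ A ω = a)
      = Pr p (fun ω => X ω = x ∧ A ω = a ∧ RM ω = 1) :=
    Pr_congr p (by tauto)
  rw [e1, e2, e3, ← key]
  rw [hc]
  field_simp
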